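/- Let ℝ⁴₊ := {x ∈ ℝ⁴ : x₂² + x₃² + x₄² ≤ 2x₁x₂ and x₁ ≥ 0} and let A ∈ ℝ^{4×4} be the block-diagonal matrix with upper-left 2×2 block [[0,1],[0,0]] and lower-right 2×2 block [[0, 4π],[−π, 0]]. Then the semigroup (e^{tA})_{t≥0} is NOT uniformly eventually nonnegative with respect to ℝ⁴₊: for every t₀ ≥ 0 there exist t ≥ t₀ and x ∈ ℝ⁴₊ such that e^{tA} x ∉ ℝ⁴₊. In fact, for each integer n ≥ 1 the vector x(n) := (n, 1, 0, √(2n−1)) lies in ℝ⁴₊ but e^{t_n A} x(n) ∉ ℝ⁴₊ for t_n := n − 3/4. -/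

import Mathlib

open scoped Matrix
open NormedSpace Real

/-- The linearly transformed ice cream cone in `ℝ⁴`. -/
def transformedIceCreamCone : Set (Fin 4 → ℝ) :=
  {x | (x 1) ^ 2 + (x 2) ^ 2 + (x 3) ^ 2 ≤ 2 * x 0 * x 1 ∧ 0 ≤ x 0}

/-- The block-diagonal matrix with blocks `[[0,1],[0,0]]` and `[[0,4π],[-π,0]]`. -/
noncomputable def exampleMatrixA : Matrix (Fin 4) (Fin 4) ℝ :=
  !![0, 1, 0, 0; 0, 0, 0, 0; 0, 0, 0, 4 * Real.pi; 0, 0, -Real.pi, 0]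

/-- The witness vectors `x(n) = (n, 1, 0, √(2n-1))`. -/
noncomputable def witnessVector (n : ℕ) : Fin 4 → ℝ :=
  ![(n : ℝ), 1, 0, Real.sqrt (2 * (n : ℝ) - 1)]

/-! ### Auxiliary machinery for computing the matrix exponential -/

lemma exp_sq_zero {𝔸 : Type*} [NormedRing 𝔸] [NormedAlgebra ℚ 𝔸] [CompleteSpace 𝔸]
    (b : 𝔸) (hb : b * b = 0) : NormedSpace.exp b = 1 + b := by
  simp only [exp_eq_tsum ℚ]
  have h : ∀ n ∉ Finset.range 2, ((n.factorial : ℚ))⁻¹ • b ^ n = 0 := by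
    intro n hn
    have h2 : 2 ≤ n := by simp at hn; omega
    have hbn : b ^ n = 0 := by
      have : b ^ n = b ^ 2 * b ^ (n - 2) := by rw [← pow_add]; congr 1; omega
      rw [this, sq, hb, zero_mul]
    rw [hbn, smul_zero]
  rw [tsum_eq_sum h]
  simp [Finset.sum_range_succ]

/-- The standard embedding of `ℂ` into real `2 × 2` matrices. -/
noncomputable def cplxToMat : ℂ →+* Matrix (Fin 2) (Fin 2) ℝ where
  toFun z := !![z.re, z.im; -z.im, z.re]
  map_one' := by ext i j; fin_cases i <;> fin_cases j <;> simp [Matrix.one_apply]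
  map_mul' z w := by
    ext i j
    fin_cases i <;> fin_cases j <;>
      simp [Matrix.mul_apply, Fin.sum_univ_two, Complex.mul_re, Complex.mul_im] <;> ring
  map_zero' := by ext i j; fin_cases i <;> fin_cases j <;> simp
  map_add' z w := by ext i j; fin_cases i <;> fin_cases j <;> simp <;> ring

lemma cplxToMat_continuous : Continuous cplxToMat := by
  apply continuous_matrix
  intro i j
  fin_cases i <;> fin_cases j <;>
    simp [cplxToMat] <;> fun_prop

lemma exp_cplxToMat (z : ℂ) : NormedSpace.exp (cplxToMat z) = cplxToMat (Complex.exp z) := by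
  letI : SeminormedRing (Matrix (Fin 2) (Fin 2) ℝ) := Matrix.linftyOpSemiNormedRing
  letI : NormedRing (Matrix (Fin 2) (Fin 2) ℝ) := Matrix.linftyOpNormedRing
  letI : NormedAlgebra ℝ (Matrix (Fin 2) (Fin 2) ℝ) := Matrix.linftyOpNormedAlgebra
  rw [Complex.exp_eq_exp_ℂ]
  exact (map_exp cplxToMat cplxToMat_continuous z).symm

lemma exp_rot (θ : ℝ) : NormedSpace.exp !![(0:ℝ), θ; -θ, 0] =
    !![Real.cos θ, Real.sin θ; -Real.sin θ, Real.cos θ] := by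
  have h1 : !![(0:ℝ), θ; -θ, 0] = cplxToMat (θ * Complex.I) := by
    ext i j; fin_cases i <;> fin_cases j <;> simp [cplxToMat]
  rw [h1, exp_cplxToMat]
  ext i j
  fin_cases i <;> fin_cases j <;>
    simp [cplxToMat, Complex.exp_ofReal_mul_I_re, Complex.exp_ofReal_mul_I_im]

lemma exp_rot' (t : ℝ) :
    NormedSpace.exp !![(0:ℝ), 4*π*t; -(π*t), 0] =
      !![cos (2*π*t), 2 * sin (2*π*t); -sin (2*π*t)/2, cos (2*π*t)] := by
  have hD : (!![(2:ℝ), 0; 0, 1]) * !![(1/2:ℝ), 0; 0, 1] = 1 := by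
    ext i j; fin_cases i <;> fin_cases j <;>
      simp [Matrix.mul_apply, Fin.sum_univ_two, Matrix.one_apply]
  have hD' : (!![(1/2:ℝ), 0; 0, 1]) * !![(2:ℝ), 0; 0, 1] = 1 := by
    ext i j; fin_cases i <;> fin_cases j <;>
      simp [Matrix.mul_apply, Fin.sum_univ_two, Matrix.one_apply]
  set U : (Matrix (Fin 2) (Fin 2) ℝ)ˣ := ⟨!![(2:ℝ), 0; 0, 1], !![(1/2:ℝ), 0; 0, 1], hD, hD'⟩
  have key : !![(0:ℝ), 4*π*t; -(π*t), 0] = (U : Matrix (Fin 2) (Fin 2) ℝ) *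
      !![(0:ℝ), 2*π*t; -(2*π*t), 0] * ((U⁻¹ : (Matrix (Fin 2) (Fin 2) ℝ)ˣ) : Matrix (Fin 2) (Fin 2) ℝ) := by
    ext i j; fin_cases i <;> fin_cases j <;>
      simp [U, Matrix.mul_apply, Fin.sum_univ_two] <;> ring
  rw [key, Matrix.exp_units_conj, exp_rot]
  ext i j; fin_cases i <;> fin_cases j <;>
    simp [U, Matrix.mul_apply, Fin.sum_univ_two] <;> ring

lemma exp_nilp (t : ℝ) : NormedSpace.exp !![(0:ℝ), t; 0, 0] = !![1, t; 0, 1] := by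
  letI : SeminormedRing (Matrix (Fin 2) (Fin 2) ℝ) := Matrix.linftyOpSemiNormedRing
  letI : NormedRing (Matrix (Fin 2) (Fin 2) ℝ) := Matrix.linftyOpNormedRing
  letI : NormedAlgebra ℝ (Matrix (Fin 2) (Fin 2) ℝ) := Matrix.linftyOpNormedAlgebra
  letI : NormedAlgebra ℚ (Matrix (Fin 2) (Fin 2) ℝ) := Matrix.linftyOpNormedAlgebra
  erw [exp_sq_zero]
  · ext i j; fin_cases i <;> fin_cases j <;> simp [Matrix.one_apply]
  · ext i j; fin_cases i <;> fin_cases j <;>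
      simp [Matrix.mul_apply, Fin.sum_univ_two]

def e4 : (Fin 2 × Fin 2) ≃ Fin 4 where
  toFun p := ⟨p.1.val + 2 * p.2.val, by omega⟩
  invFun := ![((0:Fin 2),(0:Fin 2)), (1,0), (0,1), (1,1)]
  left_inv := by decide
  right_inv := by decide

noncomputable def blocks (t : ℝ) : Fin 2 → Matrix (Fin 2) (Fin 2) ℝ :=
  ![!![0, t; 0, 0], !![0, 4*π*t; -(π*t), 0]]

lemma exp_reindex (M : Matrix (Fin 2 × Fin 2) (Fin 2 × Fin 2) ℝ) :
    NormedSpace.exp (Matrix.reindexAlgEquiv ℝ ℝ e4 M) = Matrix.reindexAlgEquiv ℝ ℝ e4 (NormedSpace.exp M) := by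
  letI : SeminormedRing (Matrix (Fin 2 × Fin 2) (Fin 2 × Fin 2) ℝ) := Matrix.linftyOpSemiNormedRing
  letI : NormedRing (Matrix (Fin 2 × Fin 2) (Fin 2 × Fin 2) ℝ) := Matrix.linftyOpNormedRing
  letI : NormedAlgebra ℝ (Matrix (Fin 2 × Fin 2) (Fin 2 × Fin 2) ℝ) := Matrix.linftyOpNormedAlgebra
  letI : SeminormedRing (Matrix (Fin 4) (Fin 4) ℝ) := Matrix.linftyOpSemiNormedRing
  letI : NormedRing (Matrix (Fin 4) (Fin 4) ℝ) := Matrix.linftyOpNormedRing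
  letI : NormedAlgebra ℝ (Matrix (Fin 4) (Fin 4) ℝ) := Matrix.linftyOpNormedAlgebra
  letI : NormedAlgebra ℚ (Matrix (Fin 2 × Fin 2) (Fin 2 × Fin 2) ℝ) := Matrix.linftyOpNormedAlgebra
  letI : NormedAlgebra ℚ (Matrix (Fin 4) (Fin 4) ℝ) := Matrix.linftyOpNormedAlgebra
  refine (map_exp (Matrix.reindexAlgEquiv ℝ ℝ e4) ?_ M).symm
  apply continuous_matrix
  intro i j
  exact (continuous_apply (e4.symm j)).comp (continuous_apply (e4.symm i))

lemma scaled_eq (t : ℝ) :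
    t • exampleMatrixA = Matrix.reindexAlgEquiv ℝ ℝ e4 (Matrix.blockDiagonal (blocks t)) := by
  ext i j
  fin_cases i <;> fin_cases j <;>
    simp [exampleMatrixA, blocks, e4, Matrix.blockDiagonal_apply, Equiv.coe_fn_symm_mk,
      Matrix.vecHead, Matrix.vecTail] <;> ring

lemma mat_pi_exp (v : Fin 2 → Matrix (Fin 2) (Fin 2) ℝ) (i : Fin 2) :
    NormedSpace.exp v i = NormedSpace.exp (v i) := by
  letI : SeminormedRing (Matrix (Fin 2) (Fin 2) ℝ) := Matrix.linftyOpSemiNormedRing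
  letI : NormedRing (Matrix (Fin 2) (Fin 2) ℝ) := Matrix.linftyOpNormedRing
  letI : NormedAlgebra ℝ (Matrix (Fin 2) (Fin 2) ℝ) := Matrix.linftyOpNormedAlgebra
  letI : NormedAlgebra ℚ (Matrix (Fin 2) (Fin 2) ℝ) := Matrix.linftyOpNormedAlgebra
  exact Pi.coe_exp v i

/-- The explicit matrix exponential `e^{tA}`. -/
noncomputable def expMat (t : ℝ) : Matrix (Fin 4) (Fin 4) ℝ :=
  !![1, t, 0, 0; 0, 1, 0, 0; 0, 0, cos (2*π*t), 2 * sin (2*π*t);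
     0, 0, -sin (2*π*t)/2, cos (2*π*t)]

lemma exp_tA (t : ℝ) : NormedSpace.exp (t • exampleMatrixA) = expMat t := by
  rw [scaled_eq, exp_reindex, Matrix.exp_blockDiagonal]
  have hv : NormedSpace.exp (blocks t) = ![!![1, t; 0, 1],
      !![cos (2*π*t), 2 * sin (2*π*t); -sin (2*π*t)/2, cos (2*π*t)]] := by
    funext i
    fin_cases i
    · rw [mat_pi_exp]
      show NormedSpace.exp (blocks t 0) = _
      rw [show blocks t 0 = !![(0:ℝ), t; 0, 0] from rfl, exp_nilp]
      simp
    · rw [mat_pi_exp]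
      show NormedSpace.exp (blocks t 1) = _
      rw [show blocks t 1 = !![(0:ℝ), 4*π*t; -(π*t), 0] from rfl, exp_rot']
      simp
  rw [hv]
  ext i j
  fin_cases i <;> fin_cases j <;>
    simp [expMat, e4, Matrix.blockDiagonal_apply, Matrix.vecHead, Matrix.vecTail]

/-! ### The main theorem -/

theorem exampleSemigroup_not_uniformly_eventually_nonneg :
    (∀ t₀ : ℝ, 0 ≤ t₀ → ∃ t : ℝ, t₀ ≤ t ∧ ∃ x ∈ transformedIceCreamCone,
      NormedSpace.exp (t • exampleMatrixA) *ᵥ x ∉ transformedIceCreamCone) ∧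
    (∀ n : ℕ, 1 ≤ n →
      witnessVector n ∈ transformedIceCreamCone ∧
      NormedSpace.exp (((n : ℝ) - 3 / 4) • exampleMatrixA) *ᵥ witnessVector n ∉
        transformedIceCreamCone) := by
  have key : ∀ n : ℕ, 1 ≤ n →
      witnessVector n ∈ transformedIceCreamCone ∧
      NormedSpace.exp (((n : ℝ) - 3 / 4) • exampleMatrixA) *ᵥ witnessVector n ∉
        transformedIceCreamCone := by
    intro n hn
    have hn1 : (1 : ℝ) ≤ (n : ℝ) := by exact_mod_cast hn
    have hs : Real.sqrt (2 * (n : ℝ) - 1) ^ 2 = 2 * (n : ℝ) - 1 :=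
      Real.sq_sqrt (by linarith)
    constructor
    · refine ⟨?_, by simp [witnessVector]⟩
      show (witnessVector n 1) ^ 2 + _ + _ ≤ _
      simp only [witnessVector, Matrix.cons_val_zero, Matrix.cons_val_one, Matrix.head_cons,
        Matrix.cons_val_two, Matrix.tail_cons, Matrix.cons_val_three]
      nlinarith [hs]
    · set t : ℝ := (n : ℝ) - 3 / 4 with ht
      have hcos : cos (2*π*t) = 0 := by
        have h : 2*π*t = π/2 + (((n : ℤ) - 1 : ℤ) : ℝ) * (2 * π) := by rw [ht]; push_cast; ring
        rw [h, Real.cos_add_int_mul_two_pi, Real.cos_pi_div_two]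
      have hsin : sin (2*π*t) = 1 := by
        have h : 2*π*t = π/2 + (((n : ℤ) - 1 : ℤ) : ℝ) * (2 * π) := by rw [ht]; push_cast; ring
        rw [h, Real.sin_add_int_mul_two_pi, Real.sin_pi_div_two]
      rw [exp_tA]
      intro hmem
      obtain ⟨h1, _⟩ := hmem
      have hy : ∀ i, (expMat t *ᵥ witnessVector n) i =
          ![(n : ℝ) + t, 1, 2 * Real.sqrt (2 * (n : ℝ) - 1), 0] i := by
        intro i
        fin_cases i <;>
          simp [expMat, witnessVector, Matrix.mulVec, dotProduct, Fin.sum_univ_four,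
            hcos, hsin, Matrix.vecHead, Matrix.vecTail] <;> ring
      rw [hy 0, hy 1, hy 2, hy 3] at h1
      simp only [Matrix.cons_val_zero, Matrix.cons_val_one, Matrix.head_cons,
        Matrix.cons_val_two, Matrix.tail_cons, Matrix.cons_val_three] at h1
      rw [ht] at h1
      nlinarith [hs]
  refine ⟨?_, key⟩
  intro t₀ ht₀
  set n : ℕ := ⌈t₀⌉₊ + 1 with hn
  have hn1 : 1 ≤ n := by omega
  refine ⟨(n : ℝ) - 3 / 4, ?_, witnessVector n, (key n hn1).1, (key n hn1).2⟩
  have h1 : t₀ ≤ (⌈t₀⌉₊ : ℝ) := Nat.le_ceil t₀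
  have h2 : ((n : ℕ) : ℝ) = (⌈t₀⌉₊ : ℝ) + 1 := by rw [hn]; push_cast; ring
  linarith
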